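/- Let U be an optimal prefix-free machine and let b : {0,1}* × {0,1}* → {0,1}* be a fixed bijective total recursive pairing function, with joint complexity H(n,s) = H_U(b(n,s)). Let C be a prefix-free machine and suppose there exists d ∈ ℕ such that 2^{n − H(n,s) − d} ≤ #S_C(n,s) for all n ∈ ℕ and all finite binary strings s with n − H(n,s) ≥ d, where S_C(n,s) = {p ∈ {0,1}* : |p| ≤ n and C(p) = s} and n is identified with a finite binary string via the bijection φ(s) = (the dyadic integer 1s) − 1. Then C is an optimal prefix-free machine. -/

import Mathlib

open scoped ENNReal

/-- A set of binary strings is prefix-free: no element is a proper prefix of another. -/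
def PrefixFreeSet (S : Set (List Bool)) : Prop :=
  ∀ p ∈ S, ∀ q ∈ S, p <+: q → p = q

/-- A prefix-free machine: a partial recursive function on binary strings
whose domain is a prefix-free set. -/
def PFMachine (C : List Bool →. List Bool) : Prop :=
  Partrec C ∧ PrefixFreeSet C.Dom

/-- `Hm C s` is the length of a shortest program `p` with `C p = s` (`∞` if none). -/
noncomputable def Hm (C : List Bool →. List Bool) (s : List Bool) : ℕ∞ :=
  sInf ((fun p : List Bool => (p.length : ℕ∞)) '' {p | s ∈ C p})

/-- An optimal prefix-free machine: for every prefix-free machine `C` there is `d ∈ ℕ`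
such that every `p ∈ dom C` has a `q` with `U q = C p` and `|q| ≤ |p| + d`. -/
def OptimalPFM (U : List Bool →. List Bool) : Prop :=
  PFMachine U ∧ ∀ C : List Bool →. List Bool, PFMachine C →
    ∃ d : ℕ, ∀ p s, s ∈ C p → ∃ q : List Bool, s ∈ U q ∧ q.length ≤ p.length + d

/-- The binary string identified with `n : ℕ` via `φ(s) = (the dyadic integer 1s) − 1`. -/
def strOfNat (n : ℕ) : List Bool := ((n + 1).bits.dropLast).reverse


def natOfStr (t : List Bool) : ℕ := t.foldl (fun a b => 2 * a + cond b 1 0) 1 - 1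

lemma strOfNat_zero : strOfNat 0 = [] := by simp [strOfNat, Nat.one_bits]

lemma strOfNat_rec (n : ℕ) (hn : n ≠ 0) :
    strOfNat n = strOfNat ((n - 1) / 2) ++ [decide ((n + 1) % 2 = 1)] := by
  obtain ⟨k, hk | hk⟩ : ∃ k, n + 1 = 2 * k ∨ n + 1 = 2 * k + 1 := ⟨(n + 1) / 2, by omega⟩
  · have hk1 : k ≠ 0 := by omega
    have hbits : (n + 1).bits = false :: k.bits := by rw [hk, Nat.bit0_bits _ hk1]
    have hne : k.bits ≠ [] := by
      have h1 : 0 < k.bits.length := by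
        rw [Nat.size_eq_bits_len] at *
        exact Nat.size_pos.mpr (by omega)
      intro h; simp [h] at h1
    have h1 : (n - 1) / 2 + 1 = k := by omega
    have h2 : decide ((n + 1) % 2 = 1) = false := by simp; omega
    rw [strOfNat, strOfNat, hbits, List.dropLast_cons_of_ne_nil hne, List.reverse_cons, h1, h2]
  · have hk1 : k ≠ 0 := by omega
    have hbits : (n + 1).bits = true :: k.bits := by rw [hk, Nat.bit1_bits]
    have hne : k.bits ≠ [] := by
      have h1 : 0 < k.bits.length := by
        rw [Nat.size_eq_bits_len] at *
        exact Nat.size_pos.mpr (by omega)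
      intro h; simp [h] at h1
    have h1 : (n - 1) / 2 + 1 = k := by omega
    have h2 : decide ((n + 1) % 2 = 1) = true := by simp; omega
    rw [strOfNat, strOfNat, hbits, List.dropLast_cons_of_ne_nil hne, List.reverse_cons, h1, h2]

lemma foldl_strOfNat (n : ℕ) :
    (strOfNat n).foldl (fun a b => 2 * a + cond b 1 0) 1 = n + 1 := by
  induction n using Nat.strong_induction_on with
  | _ n IH =>
    rcases eq_or_ne n 0 with rfl | hn
    · simp [strOfNat_zero]
    · rw [strOfNat_rec n hn, List.foldl_append, IH _ (by omega)]
      simp only [List.foldl_cons, List.foldl_nil]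
      by_cases h : (n + 1) % 2 = 1 <;> simp [h] <;> omega

lemma natOfStr_strOfNat (n : ℕ) : natOfStr (strOfNat n) = n := by
  rw [natOfStr, foldl_strOfNat]; omega

lemma strOfNat_length_pow (a : ℕ) : (strOfNat (2 ^ a - 1)).length = a := by
  have h : 2 ^ a - 1 + 1 = 2 ^ a := by
    have := Nat.one_le_two_pow (n := a); omega
  rw [strOfNat, h, List.length_reverse, List.length_dropLast, Nat.size_eq_bits_len,
    Nat.size_pow]; omega

lemma primrec_natOfStr : Primrec natOfStr := by
  have hfold : Primrec fun t : List Bool =>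
      t.foldl (fun a b => 2 * a + cond b 1 0) 1 := by
    have h := Primrec.list_foldl (α := List Bool) (β := Bool) (σ := ℕ)
      (f := id) (g := fun _ => 1)
      (h := fun _ sb => 2 * sb.1 + cond sb.2 1 0)
      Primrec.id (Primrec.const 1)
      ((Primrec.nat_add.comp
        (Primrec.nat_mul.comp (Primrec.const 2) (Primrec.fst.comp Primrec.snd))
        (Primrec.cond (Primrec.snd.comp Primrec.snd) (Primrec.const 1)
          (Primrec.const 0))).to₂)
    exact h
  exact Primrec.nat_sub.comp hfold (Primrec.const 1)

lemma primrec_strOfNat : Primrec strOfNat := by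
  have h := Primrec.nat_strong_rec (α := Unit) (fun _ n => strOfNat n)
    (g := fun _ l =>
      if l.length = 0 then some [] else
        some ((l.getD ((l.length - 1) / 2) []) ++ [decide ((l.length + 1) % 2 = 1)]))
    ?_ ?_
  · exact h.comp (Primrec.const ()) Primrec.id
  · have hdec : Primrec fun p : Unit × List (List Bool) =>
        decide ((p.2.length + 1) % 2 = 1) :=
      (PrimrecRel.comp Primrec.eq
        (Primrec.nat_mod.comp
          (Primrec.nat_add.comp (Primrec.list_length.comp Primrec.snd) (Primrec.const 1))
          (Primrec.const 2))
        (Primrec.const 1)).decide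
    have hc : PrimrecPred fun p : Unit × List (List Bool) => p.2.length = 0 :=
      PrimrecRel.comp Primrec.eq (Primrec.list_length.comp Primrec.snd) (Primrec.const 0)
    have h1 : Primrec fun p : Unit × List (List Bool) =>
        p.2.getD ((p.2.length - 1) / 2) [] :=
      (Primrec.list_getD []).comp Primrec.snd
        (Primrec.nat_div.comp
          (Primrec.nat_sub.comp (Primrec.list_length.comp Primrec.snd) (Primrec.const 1))
          (Primrec.const 2))
    have h2 : Primrec fun p : Unit × List (List Bool) =>
        [decide ((p.2.length + 1) % 2 = 1)] :=
      Primrec.list_cons.comp hdec (Primrec.const [])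
    exact Primrec.ite hc (Primrec.const (some []))
      (Primrec.option_some.comp (Primrec.list_append.comp h1 h2))
  · intro u n
    beta_reduce
    cases n with
    | zero => simp [strOfNat_zero]
    | succ m =>
      have hlen : (List.map strOfNat (List.range (m + 1))).length = m + 1 := by simp
      rw [hlen, if_neg (by omega)]
      have hget : (List.map strOfNat (List.range (m + 1))).getD ((m + 1 - 1) / 2) []
          = strOfNat (m / 2) := by
        rw [List.getD_eq_getElem?_getD, List.getElem?_map, List.getElem?_range (by omega)]
        rfl
      rw [hget, show strOfNat (m + 1) = strOfNat (m / 2) ++ [decide ((m + 1 + 1) % 2 = 1)]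
        from by rw [strOfNat_rec (m + 1) (by omega)]; norm_num]

lemma drop_eq_map_range (n : ℕ) (l : List Bool) :
    (List.range (l.length - n)).map (fun i => l.getD (n + i) false) = l.drop n := by
  apply List.ext_getElem
  · simp
  · intro i h1 h2
    simp only [List.getElem_map, List.getElem_range, List.getElem_drop]
    have hi : n + i < l.length := by simp at h2; omega
    rw [List.getD_eq_getElem?_getD, List.getElem?_eq_getElem hi]
    rfl

lemma take_eq_map_range (n : ℕ) (l : List Bool) :
    (List.range (min n l.length)).map (fun i => l.getD i false) = l.take n := by
  apply List.ext_getElem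
  · simp
  · intro i h1 h2
    simp only [List.getElem_map, List.getElem_range, List.getElem_take]
    have hi : i < l.length := by simp at h1; omega
    rw [List.getD_eq_getElem?_getD, List.getElem?_eq_getElem hi]
    rfl

lemma primrec_drop : Primrec₂ (fun n (l : List Bool) => l.drop n) := by
  have h : Primrec fun p : ℕ × List Bool =>
      (List.range (p.2.length - p.1)).map (fun i => p.2.getD (p.1 + i) false) :=
    Primrec.list_map
      (Primrec.list_range.comp
        (Primrec.nat_sub.comp (Primrec.list_length.comp Primrec.snd) Primrec.fst))
      (((Primrec.list_getD false).comp (Primrec.snd.comp Primrec.fst)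
        (Primrec.nat_add.comp (Primrec.fst.comp Primrec.fst) Primrec.snd)).to₂)
  exact (h.of_eq fun p => drop_eq_map_range p.1 p.2).to₂

lemma primrec_take : Primrec₂ (fun n (l : List Bool) => l.take n) := by
  have h : Primrec fun p : ℕ × List Bool =>
      (List.range (min p.1 p.2.length)).map (fun i => p.2.getD i false) :=
    Primrec.list_map
      (Primrec.list_range.comp
        (Primrec.nat_min.comp Primrec.fst (Primrec.list_length.comp Primrec.snd)))
      (((Primrec.list_getD false).comp (Primrec.snd.comp Primrec.fst) Primrec.snd).to₂)
  exact (h.of_eq fun p => take_eq_map_range p.1 p.2).to₂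

def parse (r : List Bool) : Option (ℕ × List Bool) :=
  let j := r.findIdx (fun b => b)
  if 2 * j + 1 ≤ r.length then
    some (natOfStr ((r.drop (j + 1)).take j), r.drop (2 * j + 1))
  else none

lemma primrec_parse : Primrec parse := by
  have hj : Primrec fun r : List Bool => r.findIdx (fun b => b) :=
    Primrec.list_findIdx Primrec.id Primrec.snd.to₂
  have hc : PrimrecPred fun r : List Bool =>
      2 * (r.findIdx (fun b => b)) + 1 ≤ r.length :=
    PrimrecRel.comp Primrec.nat_le
      (Primrec.nat_add.comp (Primrec.nat_mul.comp (Primrec.const 2) hj) (Primrec.const 1))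
      Primrec.list_length
  have h1 : Primrec fun r : List Bool =>
      natOfStr ((r.drop (r.findIdx (fun b => b) + 1)).take (r.findIdx (fun b => b))) :=
    primrec_natOfStr.comp
      (primrec_take.comp hj
        (primrec_drop.comp (Primrec.nat_add.comp hj (Primrec.const 1)) Primrec.id))
  have h2 : Primrec fun r : List Bool => r.drop (2 * r.findIdx (fun b => b) + 1) :=
    primrec_drop.comp
      (Primrec.nat_add.comp (Primrec.nat_mul.comp (Primrec.const 2) hj) (Primrec.const 1))
      Primrec.id
  exact Primrec.ite hc (Primrec.option_some.comp (h1.pair h2)) (Primrec.const none)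

def Wm (U : List Bool →. List Bool) (b : List Bool × List Bool → List Bool) :
    List Bool →. List Bool :=
  fun r => (Part.ofOption (parse r)).bind fun cq =>
    (U cq.2).map fun s => b (strOfNat (cq.2.length + cq.1), s)

lemma partrec_Wm {U : List Bool →. List Bool} {b : List Bool × List Bool → List Bool}
    (hU : Partrec U) (hb : Computable b) : Partrec (Wm U b) := by
  have h2 : Partrec fun r : List Bool => (Part.ofOption (parse r)) :=
    Computable.ofOption primrec_parse.to_comp
  have h3 : Partrec fun p : List Bool × (ℕ × List Bool) => U p.2.2 :=
    hU.comp (Computable.snd.comp Computable.snd)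
  have hg : Computable₂ fun (p : List Bool × (ℕ × List Bool)) (s : List Bool) =>
      b (strOfNat (p.2.2.length + p.2.1), s) := by
    have hadd : Primrec fun q : (List Bool × (ℕ × List Bool)) × List Bool =>
        q.1.2.2.length + q.1.2.1 :=
      Primrec.nat_add.comp
        (Primrec.list_length.comp (Primrec.snd.comp (Primrec.snd.comp Primrec.fst)))
        (Primrec.fst.comp (Primrec.snd.comp Primrec.fst))
    exact (hb.comp ((Computable.pair ((primrec_strOfNat.comp hadd).to_comp)
      Primrec.snd.to_comp))).to₂
  exact h2.bind (h3.map hg).to₂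

lemma findIdx_replicate (a : ℕ) (l : List Bool) :
    List.findIdx (fun b => b) (List.replicate a false ++ true :: l) = a := by
  induction a with
  | zero => simp [List.findIdx_cons]
  | succ m ih => simp only [List.replicate_succ, List.cons_append, List.findIdx_cons,
      cond_false, ih]

lemma parse_encode (c : ℕ) (q : List Bool) :
    parse (List.replicate (strOfNat c).length false ++ true :: (strOfNat c ++ q))
      = some (c, q) := by
  set a := (strOfNat c).length with ha
  set r := List.replicate a false ++ true :: (strOfNat c ++ q) with hr
  have hfi : r.findIdx (fun b => b) = a := findIdx_replicate a _
  have hrlen : r.length = 2 * a + 1 + q.length := by simp [hr]; omega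
  have hd1 : r.drop (a + 1) = strOfNat c ++ q := by
    have h := List.drop_left (l₁ := List.replicate a false ++ [true]) (l₂ := strOfNat c ++ q)
    simpa [hr, List.append_assoc] using h
  have ht1 : (strOfNat c ++ q).take a = strOfNat c := by
    have := List.take_left (l₁ := strOfNat c) (l₂ := q)
    rwa [← ha] at this
  have hd2 : r.drop (2 * a + 1) = q := by
    have h := List.drop_left (l₁ := (List.replicate a false ++ [true]) ++ strOfNat c) (l₂ := q)
    have hl : ((List.replicate a false ++ [true]) ++ strOfNat c).length = 2 * a + 1 := by
      simp; omega
    rw [hl] at h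
    rw [hr]
    rw [show List.replicate a false ++ true :: (strOfNat c ++ q)
      = ((List.replicate a false ++ [true]) ++ strOfNat c) ++ q by simp]
    exact h
  rw [parse]
  simp only [hfi, hrlen, if_pos (by omega : 2 * a + 1 ≤ 2 * a + 1 + q.length)]
  rw [hd1, ht1, hd2, natOfStr_strOfNat]

lemma parse_eq_some {r : List Bool} {c : ℕ} {q : List Bool} (h : parse r = some (c, q)) :
    2 * (r.findIdx (fun b => b)) + 1 ≤ r.length ∧
      q = r.drop (2 * (r.findIdx (fun b => b)) + 1) := by
  rw [parse] at h
  split_ifs at h with hg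
  · refine ⟨hg, ?_⟩
    simp only [Option.some.injEq, Prod.mk.injEq] at h
    exact h.2.symm

lemma mem_Wm {U : List Bool →. List Bool} {b : List Bool × List Bool → List Bool}
    {c : ℕ} {q s : List Bool} (h : s ∈ U q) :
    b (strOfNat (q.length + c), s) ∈
      Wm U b (List.replicate (strOfNat c).length false ++ true :: (strOfNat c ++ q)) := by
  rw [Wm, Part.mem_bind_iff]
  refine ⟨(c, q), ?_, ?_⟩
  · rw [Part.mem_ofOption, parse_encode]; rfl
  · exact Part.mem_map_iff _ |>.2 ⟨s, h, rfl⟩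

lemma Wm_dom {U : List Bool →. List Bool} {b : List Bool × List Bool → List Bool}
    {r : List Bool} (h : r ∈ (Wm U b).Dom) :
    ∃ c q, parse r = some (c, q) ∧ q ∈ U.Dom := by
  obtain ⟨y, hy⟩ := (PFun.mem_dom _ _).1 h
  rw [Wm, Part.mem_bind_iff] at hy
  obtain ⟨cq, hcq, hy2⟩ := hy
  rw [Part.mem_ofOption] at hcq
  obtain ⟨s, hs, _⟩ := (Part.mem_map_iff _).1 hy2
  exact ⟨cq.1, cq.2, by rw [← hcq], (PFun.mem_dom _ _).2 ⟨s, hs⟩⟩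

lemma Wm_prefixFree {U : List Bool →. List Bool} {b : List Bool × List Bool → List Bool}
    (hUpf : PrefixFreeSet U.Dom) : PrefixFreeSet (Wm U b).Dom := by
  intro r hr r' hr' hpre
  obtain ⟨c, q, hpq, hq⟩ := Wm_dom hr
  obtain ⟨c', q', hpq', hq'⟩ := Wm_dom hr'
  obtain ⟨hg, hqe⟩ := parse_eq_some hpq
  obtain ⟨hg', hqe'⟩ := parse_eq_some hpq'
  set j := r.findIdx (fun b => b) with hj
  set j' := r'.findIdx (fun b => b) with hj'
  have hjlt : j < r.length := by omega
  have hjlt' : j' < r'.length := by omega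
  have hlen_le : r.length ≤ r'.length := hpre.length_le
  have hjj : j' = j := by
    rcases lt_trichotomy j j' with h | h | h
    · have h1 : r'[j]'(by omega) = false := by
        simpa using List.not_of_lt_findIdx (p := fun b => b) (xs := r') h
      have h2 : r[j]'hjlt = true := by
        simpa using List.findIdx_getElem (p := fun b => b) (xs := r) (w := hjlt)
      rw [hpre.getElem hjlt] at h2
      rw [h1] at h2; exact absurd h2 (by simp)
    · exact h.symm
    · have h1 : r[j']'(by omega) = false := by
        simpa using List.not_of_lt_findIdx (p := fun b => b) (xs := r) h
      have h2 : r'[j']'hjlt' = true := by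
        simpa using List.findIdx_getElem (p := fun b => b) (xs := r') (w := hjlt')
      rw [← hpre.getElem (by omega)] at h2
      rw [h1] at h2; exact absurd h2 (by simp)
  have hqq' : q <+: q' := by
    rw [hqe, hqe', hjj]
    exact hpre.drop _
  have heq : q = q' := hUpf q hq q' hq' hqq'
  have hql : q.length = r.length - (2 * j + 1) := by rw [hqe]; simp
  have hql' : q'.length = r'.length - (2 * j' + 1) := by rw [hqe']; simp
  apply hpre.eq_of_length
  have := heq ▸ hql
  omega

lemma Hm_aux_le {U : List Bool →. List Bool} {s p : List Bool} (h : s ∈ U p) :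
    sInf ((fun p : List Bool => (p.length : ℕ∞)) '' {p | s ∈ U p}) ≤ (p.length : ℕ∞) :=
  sInf_le ⟨p, h, rfl⟩

lemma aux_pow (k : ℕ) : 3 * k + 20 ≤ 2 ^ (k + 5) := by
  induction k with
  | zero => norm_num
  | succ m ih =>
    have h2 : (3:ℕ) ≤ 2 ^ (m + 5) :=
      le_trans (by norm_num : (3:ℕ) ≤ 2 ^ 5) (Nat.pow_le_pow_right (by norm_num) (by omega))
    calc 3 * (m + 1) + 20 = 3 * m + 20 + 3 := by ring
    _ ≤ 2 ^ (m + 5) + 2 ^ (m + 5) := by omega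
    _ = 2 ^ (m + 1 + 5) := by ring

lemma Hm_le {U : List Bool →. List Bool} {s p : List Bool} (h : s ∈ U p) :
    Hm U s ≤ (p.length : ℕ∞) :=
  sInf_le ⟨p, h, rfl⟩

lemma Hm_toNat_le {U : List Bool →. List Bool} {s : List Bool} {m : ℕ}
    (h : Hm U s ≤ (m : ℕ∞)) : (Hm U s).toNat ≤ m := by
  have ht : Hm U s ≠ ⊤ := by
    intro he; rw [he] at h; exact absurd h (by simp)
  rw [← ENat.coe_toNat ht] at h
  exact_mod_cast h

lemma Hm_exists_min {U : List Bool →. List Bool} {s : List Bool} (h : ∃ p, s ∈ U p) :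
    ∃ p, s ∈ U p ∧ p.length = (Hm U s).toNat := by
  have hAne : {k : ℕ | ∃ p, s ∈ U p ∧ p.length = k}.Nonempty := by
    obtain ⟨p, hp⟩ := h; exact ⟨p.length, p, hp, rfl⟩
  obtain ⟨p, hp, hpl⟩ := Nat.sInf_mem hAne
  refine ⟨p, hp, ?_⟩
  have h1 : Hm U s = ((sInf {k : ℕ | ∃ p, s ∈ U p ∧ p.length = k} : ℕ) : ℕ∞) := by
    apply le_antisymm
    · rw [← hpl]; exact Hm_le hp
    · apply le_sInf
      rintro x ⟨q, hq, rfl⟩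
      show ((sInf {k : ℕ | ∃ p, s ∈ U p ∧ p.length = k} : ℕ) : ℕ∞) ≤ (q.length : ℕ∞)
      have hin : q.length ∈ {k : ℕ | ∃ p, s ∈ U p ∧ p.length = k} := ⟨q, hq, rfl⟩
      exact_mod_cast Nat.sInf_le hin
  rw [h1, ENat.toNat_coe, hpl]

/-- If a prefix-free machine `C` satisfies `2^(n − H(n,s) − d) ≤ #S_C(n,s)` whenever
`n − H(n,s) ≥ d` (where `H(n,s) = H_U(b(n,s))` for a fixed optimal `U` and recursive
pairing bijection `b`), then `C` is optimal. -/
theorem optimal_of_card_S_ge (U : List Bool →. List Bool) (hU : OptimalPFM U)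
    (b : List Bool × List Bool → List Bool) (hb : Function.Bijective b)
    (hbc : Computable b)
    (C : List Bool →. List Bool) (hC : PFMachine C)
    (d : ℕ)
    (hd : ∀ (n : ℕ) (s : List Bool), (Hm U (b (strOfNat n, s))).toNat + d ≤ n →
      (2 : ℝ) ^ ((n : ℤ) - ((Hm U (b (strOfNat n, s))).toNat : ℤ) - d) ≤
        ({p : List Bool | p.length ≤ n ∧ s ∈ C p}.ncard : ℝ)) :
    OptimalPFM C := by
  obtain ⟨⟨hUpr, hUpf⟩, hUopt⟩ := hU
  refine ⟨hC, ?_⟩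
  intro D hD
  obtain ⟨dU, hdU⟩ := hUopt D hD
  have hWpf : PFMachine (Wm U b) := ⟨partrec_Wm hUpr hbc, Wm_prefixFree hUpf⟩
  obtain ⟨e, he⟩ := hUopt (Wm U b) hWpf
  have hlen : (strOfNat (2 ^ (e + d + 5) - 1)).length = e + d + 5 :=
    strOfNat_length_pow (e + d + 5)
  refine ⟨dU + (2 ^ (e + d + 5) - 1), ?_⟩
  intro p s hs
  obtain ⟨q₀, hq₀, hq₀l⟩ := hdU p s hs
  obtain ⟨q₁, hq₁, hq₁l⟩ := Hm_exists_min ⟨q₀, hq₀⟩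
  have hmem := mem_Wm (b := b) (c := 2 ^ (e + d + 5) - 1) hq₁
  obtain ⟨q₂, hq₂, hq₂l⟩ := he _ _ hmem
  rw [hq₁l] at hq₂
  have hrlen : (List.replicate (strOfNat (2 ^ (e + d + 5) - 1)).length false ++
      true :: (strOfNat (2 ^ (e + d + 5) - 1) ++ q₁)).length
      = 2 * (e + d + 5) + 1 + (Hm U s).toNat := by
    simp [hlen, hq₁l]; omega
  rw [hrlen] at hq₂l
  have hHle : (Hm U (b (strOfNat ((Hm U s).toNat + (2 ^ (e + d + 5) - 1)), s))).toNat
      ≤ 2 * (e + d + 5) + 1 + (Hm U s).toNat + e :=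
    Hm_toNat_le (le_trans (Hm_le hq₂) (by exact_mod_cast hq₂l))
  have hpow := aux_pow (e + d)
  have hcond : (Hm U (b (strOfNat ((Hm U s).toNat + (2 ^ (e + d + 5) - 1)), s))).toNat + d
      ≤ (Hm U s).toNat + (2 ^ (e + d + 5) - 1) := by omega
  have hd' := hd ((Hm U s).toNat + (2 ^ (e + d + 5) - 1)) s hcond
  have hpos : (0:ℝ) < 2 ^ ((((Hm U s).toNat + (2 ^ (e + d + 5) - 1) : ℕ) : ℤ)
      - ((Hm U (b (strOfNat ((Hm U s).toNat + (2 ^ (e + d + 5) - 1)), s))).toNat : ℤ) - d) :=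
    zpow_pos (by norm_num) _
  have hne : ({p : List Bool |
      p.length ≤ (Hm U s).toNat + (2 ^ (e + d + 5) - 1) ∧ s ∈ C p}).ncard ≠ 0 := by
    intro h0
    rw [h0, Nat.cast_zero] at hd'
    exact absurd hd' (not_le.mpr hpos)
  obtain ⟨p', hp'⟩ := Set.nonempty_of_ncard_ne_zero hne
  refine ⟨p', hp'.2, ?_⟩
  have hk0 : (Hm U s).toNat ≤ q₀.length := Hm_toNat_le (Hm_le hq₀)
  have hp1 := hp'.1
  omega
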